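/- arXiv:0806.4510 — 8 statements merged into one kernel-verified Lean document; each statement's English description precedes it below -/
import Mathlib

section
/- Let F be a finite field with q elements and let R be a polynomial in F[X_1, …, X_n]. If R is nonzero and the degree of R in each variable X_i is at most q−1, then there exists a point (x_1, …, x_n) in F^n such that R(x_1, …, x_n) ≠ 0. -/
universe u

theorem nonzero_eval_of_degreeOf_le_aux {F : Type u} [Field F] [Fintype F] (q n : ℕ)
    (hq : Fintype.card F = q) (R : MvPolynomial (Fin n) F) (hR : R ≠ 0)
    (hdeg : ∀ i : Fin n, R.degreeOf i ≤ q - 1) :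
    ∃ x : Fin n → F, MvPolynomial.eval x R ≠ 0 := by
  by_contra h
  push_neg at h
  apply hR
  set e : Fin n ≃ ULift.{u} (Fin n) := Equiv.ulift.symm
  set R' := MvPolynomial.rename e R with hR'
  have hR'0 : R' = 0 := by
    apply MvPolynomial.eq_zero_of_eval_eq_zero _ _ R'
    · intro v
      rw [hR', MvPolynomial.eval_rename]
      exact h _
    · rw [MvPolynomial.mem_restrictDegree]
      intro s hs i
      have hdeg' : R'.degreeOf i ≤ q - 1 := by
        rw [hR', show i = e (e.symm i) by simp, MvPolynomial.degreeOf_rename_of_injective e.injective (e.symm i)]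
        simpa using hdeg (e.symm i)
      exact le_trans (MvPolynomial.degreeOf_le_iff.mp hdeg' s hs) (by rw [hq])
  have := congrArg (MvPolynomial.rename e.symm) hR'0
  simpa [hR', MvPolynomial.rename_rename] using this

/-- If `R` is a nonzero polynomial over a finite field `F` with `q` elements whose degree in
each variable is at most `q - 1`, then `R` has a nonzero value at some point of `F^n`. -/
theorem nonzero_eval_of_degreeOf_le {F : Type*} [Field F] [Fintype F] (q n : ℕ)
    (hq : Fintype.card F = q) (R : MvPolynomial (Fin n) F) (hR : R ≠ 0)
    (hdeg : ∀ i : Fin n, R.degreeOf i ≤ q - 1) :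
    ∃ x : Fin n → F, MvPolynomial.eval x R ≠ 0 :=
  nonzero_eval_of_degreeOf_le_aux q n hq R hR hdeg
end

section
/- Let F be a finite field with q elements and let P be a polynomial in F[X_1, …, X_n]. Let R be a reduced representative of P, i.e., the degree of R in each variable X_i is at most q−1 and P−R lies in the ideal generated by X_1^q−X_1, …, X_n^q−X_n. Then there exists a point (x_1, …, x_n) in F^n with P(x_1, …, x_n) ≠ 0 if and only if R is not the zero polynomial. -/
universe u

/-- Universe-polymorphic version of `MvPolynomial.eq_zero_of_eval_eq_zero`. -/
theorem aux_eq_zero_of_eval_eq_zero {K : Type u} [Fintype K] [Field K] (n : ℕ)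
    (p : MvPolynomial (Fin n) K) (h : ∀ v : Fin n → K, MvPolynomial.eval v p = 0)
    (hp : ∀ s ∈ p.support, ∀ i, s i ≤ Fintype.card K - 1) : p = 0 := by
  classical
  set e : Fin n → ULift.{u} (Fin n) := fun i => ULift.up i with he
  have hei : Function.Injective e := fun a b hab => congrArg ULift.down hab
  have hR0 : MvPolynomial.rename e p = 0 := by
    apply MvPolynomial.eq_zero_of_eval_eq_zero (K := K) (σ := ULift.{u} (Fin n))
    · intro v
      rw [MvPolynomial.eval_rename]
      exact h _
    · rw [MvPolynomial.mem_restrictDegree]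
      intro s hs i
      rw [MvPolynomial.support_rename_of_injective hei] at hs
      obtain ⟨t, ht, rfl⟩ := Finset.mem_image.mp hs
      rcases i with ⟨i⟩
      have hd : (Finsupp.mapDomain e t) (e i) = t i := Finsupp.mapDomain_apply hei t i
      rw [show (ULift.up i : ULift (Fin n)) = e i from rfl, hd]
      exact hp t ht i
  exact (MvPolynomial.rename_injective e hei) (by simpa using hR0)

/-- Let `F` be a finite field with `q` elements and `P ∈ F[X_1, …, X_n]`.  If `R` is a reduced
representative of `P` (degree at most `q - 1` in each variable, and `P - R` lies in the ideal
generated by the `X_i^q - X_i`), then `P` has a nonzero value on `F^n` iff `R ≠ 0`. -/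
theorem exists_nonzero_eval_iff_reduced_ne_zero {F : Type*} [Field F] [Fintype F] (q n : ℕ)
    (hq : Fintype.card F = q) (P R : MvPolynomial (Fin n) F)
    (hdeg : ∀ i : Fin n, R.degreeOf i ≤ q - 1)
    (hmem : P - R ∈ Ideal.span
      (Set.range fun i : Fin n => (MvPolynomial.X i : MvPolynomial (Fin n) F) ^ q
        - MvPolynomial.X i)) :
    (∃ x : Fin n → F, MvPolynomial.eval x P ≠ 0) ↔ R ≠ 0 := by
  have heval : ∀ x : Fin n → F, MvPolynomial.eval x P = MvPolynomial.eval x R := by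
    intro x
    have hker : Ideal.span
        (Set.range fun i : Fin n => (MvPolynomial.X i : MvPolynomial (Fin n) F) ^ q
          - MvPolynomial.X i) ≤ RingHom.ker (MvPolynomial.eval x) := by
      rw [Ideal.span_le]
      rintro _ ⟨i, rfl⟩
      simp [RingHom.mem_ker, ← hq, FiniteField.pow_card]
    have := hker hmem
    rw [RingHom.mem_ker, map_sub, sub_eq_zero] at this
    exact this
  constructor
  · rintro ⟨x, hx⟩ rfl
    exact hx (by rw [heval x, map_zero])
  · intro hR
    by_contra h
    push_neg at h
    apply hR
    apply aux_eq_zero_of_eval_eq_zero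
    · intro v
      rw [← heval v]; exact h v
    · intro s hs i
      rw [hq]
      exact (MvPolynomial.degreeOf_le_iff.mp (hdeg i) s hs)
end

section
/- Let F be a finite field with q elements, let P be a polynomial in F[X_1, …, X_n], and fix a monomial ordering ≺ on the monomials in X_1, …, X_n. Let R be a reduced representative of P (the degree of R in each variable is at most q−1 and P−R lies in the ideal generated by X_1^q−X_1, …, X_n^q−X_n), assume R ≠ 0, and let X_1^{j_1}⋯X_n^{j_n} be the leading monomial of R with respect to ≺. Then the number of points (x_1, …, x_n) in F^n with P(x_1, …, x_n) = 0 is at most q^n − (q−j_1)(q−j_2)⋯(q−j_n). -/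
/-- The leading monomial (exponent vector) of a polynomial `f` with respect to a monomial
order `m`: the `m`-largest element of the support of `f` (and `0` for the zero polynomial). -/
noncomputable def leadingExp {σ K : Type*} [CommSemiring K] (m : MonomialOrder σ)
    (f : MvPolynomial σ K) : σ →₀ ℕ :=
  m.toSyn.symm (f.support.sup fun d => m.toSyn d)

open MvPolynomial

lemma leadingExp_mem {σ K : Type*} [CommSemiring K] (m : MonomialOrder σ)
    {f : MvPolynomial σ K} (hf : f ≠ 0) : leadingExp m f ∈ f.support := by
  obtain ⟨b, hb, hsup⟩ := Finset.exists_mem_eq_sup f.support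
    (MvPolynomial.support_nonempty.mpr hf) (fun d => m.toSyn d)
  rw [leadingExp, hsup, AddEquiv.symm_apply_apply]
  exact hb

lemma le_leadingExp {σ K : Type*} [CommSemiring K] (m : MonomialOrder σ)
    {f : MvPolynomial σ K} {d : σ →₀ ℕ} (hd : d ∈ f.support) :
    m.toSyn d ≤ m.toSyn (leadingExp m f) := by
  rw [leadingExp, AddEquiv.apply_symm_apply]
  exact Finset.le_sup hd

/-- Every polynomial is congruent, modulo the ideal generated by `R` and the field
equations `X i ^ q - X i`, to a polynomial all of whose monomials lie in the box
`[0, q-1]^n` and are not divisible by the leading monomial of `R`. -/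
lemma reduce_modulo {F : Type*} [Field F] {n q : ℕ} (hq : 2 ≤ q)
    (m : MonomialOrder (Fin n)) (R : MvPolynomial (Fin n) F) (hR : R ≠ 0)
    (f : MvPolynomial (Fin n) F) :
    ∃ g : MvPolynomial (Fin n) F,
      (∀ a ∈ g.support, (∀ i, a i < q) ∧ ¬ leadingExp m R ≤ a) ∧
      f - g ∈ Ideal.span ({R} ∪ Set.range fun i : Fin n =>
        (MvPolynomial.X i : MvPolynomial (Fin n) F) ^ q - MvPolynomial.X i) := by
  classical
  set J : Ideal (MvPolynomial (Fin n) F) := Ideal.span ({R} ∪ Set.range fun i : Fin n =>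
        (MvPolynomial.X i : MvPolynomial (Fin n) F) ^ q - MvPolynomial.X i) with hJ
  set j := leadingExp m R with hj
  suffices H : ∀ N : m.syn, ∀ f : MvPolynomial (Fin n) F, m.toSyn (leadingExp m f) = N →
      ∃ g : MvPolynomial (Fin n) F,
        (∀ a ∈ g.support, (∀ i, a i < q) ∧ ¬ j ≤ a) ∧ f - g ∈ J by
    exact H _ f rfl
  intro N
  induction N using WellFoundedLT.induction with
  | _ N ih =>
  intro f hfN
  by_cases hf0 : f = 0
  · exact ⟨0, by simp, by simp [hf0]⟩
  set b := leadingExp m f with hb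
  set c := MvPolynomial.coeff b f with hc
  have hcne : c ≠ 0 := MvPolynomial.mem_support_iff.mp (leadingExp_mem m hf0)
  -- helper for tails
  have tail : ∀ f' : MvPolynomial (Fin n) F,
      (∀ a ∈ f'.support, m.toSyn a < N) →
      ∃ g : MvPolynomial (Fin n) F,
        (∀ a ∈ g.support, (∀ i, a i < q) ∧ ¬ j ≤ a) ∧ f' - g ∈ J := by
    intro f' hlt
    rcases eq_or_ne f' 0 with h0 | h0
    · exact ⟨0, by simp, by simp [h0]⟩
    · exact ih _ (hfN ▸ hlt _ (leadingExp_mem m h0)) f' rfl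
  -- helper: subtract an element h of J whose leading term matches that of f
  have step : ∀ h : MvPolynomial (Fin n) F, h ∈ J → MvPolynomial.coeff b h = c →
      (∀ a ∈ h.support, m.toSyn a ≤ m.toSyn b) →
      ∃ g : MvPolynomial (Fin n) F,
        (∀ a ∈ g.support, (∀ i, a i < q) ∧ ¬ j ≤ a) ∧ f - g ∈ J := by
    intro h hJmem hcoeff hsupp
    have hsub : ∀ a ∈ (f - h).support, m.toSyn a < N := by
      intro a ha
      have hane : MvPolynomial.coeff a (f - h) ≠ 0 := MvPolynomial.mem_support_iff.mp ha
      have hab : a ≠ b := by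
        rintro rfl
        rw [MvPolynomial.coeff_sub, hcoeff, ← hc, sub_self] at hane
        exact hane rfl
      have hab' : m.toSyn a ≠ m.toSyn b := fun e => hab (m.toSyn.injective e)
      have hle : m.toSyn a ≤ m.toSyn b := by
        rw [MvPolynomial.coeff_sub] at hane
        by_cases haf : MvPolynomial.coeff a f = 0
        · have : MvPolynomial.coeff a h ≠ 0 := by
            intro e; rw [haf, e, sub_self] at hane; exact hane rfl
          exact hsupp a (MvPolynomial.mem_support_iff.mpr this)
        · exact le_leadingExp m (MvPolynomial.mem_support_iff.mpr haf)
      rw [← hfN]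
      exact lt_of_le_of_ne hle hab'
    obtain ⟨g, hgsupp, hgJ⟩ := tail (f - h) hsub
    refine ⟨g, hgsupp, ?_⟩
    have : f - g = (f - h - g) + h := by ring
    rw [this]
    exact J.add_mem hgJ hJmem
  by_cases hbox : ∀ i, b i < q
  · by_cases hjb : j ≤ b
    · -- reduce by R
      set lc := MvPolynomial.coeff j R with hlc
      have hlcne : lc ≠ 0 := MvPolynomial.mem_support_iff.mp (leadingExp_mem m hR)
      refine step (R * MvPolynomial.monomial (b - j) (c / lc)) ?_ ?_ ?_
      · exact Ideal.mul_mem_right _ _ (Ideal.subset_span (Set.mem_union_left _ rfl))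
      · rw [MvPolynomial.coeff_mul_monomial', if_pos tsub_le_self,
          tsub_tsub_cancel_of_le hjb, ← hlc, mul_div_cancel₀ _ hlcne]
      · intro a ha
        have hane := MvPolynomial.mem_support_iff.mp ha
        rw [MvPolynomial.coeff_mul_monomial'] at hane
        by_cases hba : b - j ≤ a
        · rw [if_pos hba] at hane
          have hRne : MvPolynomial.coeff (a - (b - j)) R ≠ 0 := fun e => hane (by rw [e, zero_mul])
          have h1 : m.toSyn (a - (b - j)) ≤ m.toSyn j :=
            le_leadingExp m (MvPolynomial.mem_support_iff.mpr hRne)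
          have h2 : a = (a - (b - j)) + (b - j) := (tsub_add_cancel_of_le hba).symm
          have h3 : b = j + (b - j) := (add_tsub_cancel_of_le hjb).symm
          calc m.toSyn a = m.toSyn (a - (b - j)) + m.toSyn (b - j) := by rw [← map_add, ← h2]
            _ ≤ m.toSyn j + m.toSyn (b - j) := add_le_add_left h1 _
            _ = m.toSyn b := by rw [← map_add, ← h3]
        · rw [if_neg hba] at hane; exact absurd rfl hane
    · -- leading monomial already standard; peel it off
      have hsub : ∀ a ∈ (f - MvPolynomial.monomial b c).support, m.toSyn a < N := by
        intro a ha
        have hane := MvPolynomial.mem_support_iff.mp ha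
        rw [MvPolynomial.coeff_sub, MvPolynomial.coeff_monomial] at hane
        have hab : a ≠ b := by rintro rfl; simp [← hc] at hane
        rw [if_neg (fun e => hab e.symm), sub_zero] at hane
        rw [← hfN]
        exact lt_of_le_of_ne (le_leadingExp m (MvPolynomial.mem_support_iff.mpr hane))
          fun e => hab (m.toSyn.injective e)
      obtain ⟨g, hgsupp, hgJ⟩ := tail _ hsub
      refine ⟨g + MvPolynomial.monomial b c, ?_, ?_⟩
      · intro a ha
        rcases Finset.mem_union.mp (MvPolynomial.support_add ha) with h | h
        · exact hgsupp a h
        · rw [MvPolynomial.support_monomial, if_neg hcne] at h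
          rw [Finset.mem_singleton.mp h]
          exact ⟨hbox, hjb⟩
      · have : f - (g + MvPolynomial.monomial b c) = f - MvPolynomial.monomial b c - g := by ring
        rw [this]
        exact hgJ
  · -- some exponent ≥ q : reduce by X i ^ q - X i
    push_neg at hbox
    obtain ⟨i, hiq⟩ := hbox
    have hsle : Finsupp.single i q ≤ b := Finsupp.single_le_iff.mpr hiq
    set a₀ : Fin n →₀ ℕ := b - Finsupp.single i q + Finsupp.single i 1 with ha₀
    have hexp : (MvPolynomial.monomial (b - Finsupp.single i q) c) *
        ((MvPolynomial.X i : MvPolynomial (Fin n) F) ^ q - MvPolynomial.X i)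
        = MvPolynomial.monomial b c - MvPolynomial.monomial a₀ c := by
      rw [mul_sub, MvPolynomial.X_pow_eq_monomial, MvPolynomial.X,
        MvPolynomial.monomial_mul, MvPolynomial.monomial_mul,
        tsub_add_cancel_of_le hsle, mul_one]
    have ha₀i : a₀ i < b i := by
      simp only [ha₀, Finsupp.add_apply, Finsupp.tsub_apply, Finsupp.single_eq_same]
      omega
    have ha₀b : a₀ ≠ b := fun e => absurd (congrFun (congrArg _ e) i) (Nat.ne_of_lt ha₀i)
    have ha₀le : a₀ ≤ b := by
      intro k
      rcases eq_or_ne k i with rfl | hk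
      · exact ha₀i.le
      · simp [ha₀, Finsupp.single_eq_of_ne' (fun e => hk e.symm)]
    refine step ((MvPolynomial.monomial (b - Finsupp.single i q) c) *
        ((MvPolynomial.X i : MvPolynomial (Fin n) F) ^ q - MvPolynomial.X i)) ?_ ?_ ?_
    · exact Ideal.mul_mem_left _ _ (Ideal.subset_span (Set.mem_union_right _ ⟨i, rfl⟩))
    · rw [hexp, MvPolynomial.coeff_sub, MvPolynomial.coeff_monomial, if_pos rfl,
        MvPolynomial.coeff_monomial, if_neg ha₀b, sub_zero]
    · intro a ha
      rw [hexp] at ha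
      have := MvPolynomial.support_sub _ _ _ ha
      rcases Finset.mem_union.mp this with h | h
      · have := MvPolynomial.support_monomial_subset h
        rw [Finset.mem_singleton.mp this]
      · have := MvPolynomial.support_monomial_subset h
        rw [Finset.mem_singleton.mp this]
        exact m.toSyn_monotone ha₀le

/-- Let `F` be a finite field with `q` elements, `P ∈ F[X_1, …, X_n]`, and let `R` be a
reduced representative of `P` modulo `(X_1^q - X_1, …, X_n^q - X_n)` with `R ≠ 0`.  If
`X_1^{j_1} ⋯ X_n^{j_n}` is the leading monomial of `R` with respect to a monomial order,
then `P` has at most `q^n - (q - j_1) ⋯ (q - j_n)` zeros in `F^n`. -/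
theorem card_zeros_le_of_leading_monomial {F : Type*} [Field F] [Fintype F] (q n : ℕ)
    (hq : Fintype.card F = q) (m : MonomialOrder (Fin n)) (P R : MvPolynomial (Fin n) F)
    (hdeg : ∀ i : Fin n, R.degreeOf i ≤ q - 1)
    (hmem : P - R ∈ Ideal.span
      (Set.range fun i : Fin n => (MvPolynomial.X i : MvPolynomial (Fin n) F) ^ q
        - MvPolynomial.X i))
    (hR : R ≠ 0) :
    {x : Fin n → F | MvPolynomial.eval x P = 0}.ncard ≤
      q ^ n - ∏ i : Fin n, (q - leadingExp m R i) := by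
  classical
  have hq2 : 2 ≤ q := hq ▸ Fintype.one_lt_card
  set j := leadingExp m R with hj
  -- the field equations vanish everywhere
  have hfe : ∀ (x : Fin n → F) (i : Fin n),
      eval x ((MvPolynomial.X i : MvPolynomial (Fin n) F) ^ q - MvPolynomial.X i) = 0 := by
    intro x i
    simp only [map_sub, map_pow, eval_X]
    rw [← hq, FiniteField.pow_card, sub_self]
  -- zeros of P coincide with zeros of R
  have heval : ∀ x : Fin n → F, eval x P = eval x R := by
    intro x
    have hker : Ideal.span
        (Set.range fun i : Fin n => (MvPolynomial.X i : MvPolynomial (Fin n) F) ^ q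
          - MvPolynomial.X i) ≤ RingHom.ker (eval x) := by
      rw [Ideal.span_le]
      rintro _ ⟨i, rfl⟩
      exact hfe x i
    have := hker hmem
    rw [RingHom.mem_ker, map_sub, sub_eq_zero] at this
    exact this
  set S : Set (Fin n → F) := {x : Fin n → F | MvPolynomial.eval x P = 0} with hS
  have hSR : ∀ x : Fin n → F, x ∈ S ↔ eval x R = 0 := by
    intro x; rw [hS, Set.mem_setOf_eq, heval]
  -- every element of the big ideal vanishes on S
  set J : Ideal (MvPolynomial (Fin n) F) := Ideal.span ({R} ∪ Set.range fun i : Fin n =>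
        (MvPolynomial.X i : MvPolynomial (Fin n) F) ^ q - MvPolynomial.X i) with hJ
  have hvanish : ∀ x ∈ S, ∀ h ∈ J, eval x h = 0 := by
    intro x hx h hh
    have hker : J ≤ RingHom.ker (eval x) := by
      rw [hJ, Ideal.span_le]
      rintro g (rfl | ⟨i, rfl⟩)
      · exact (hSR x).mp hx
      · exact hfe x i
    exact hker hh
  -- the standard monomials
  set emb := ((Finsupp.equivFunOnFinite.symm : (Fin n → ℕ) ≃ (Fin n →₀ ℕ))).toEmbedding with hemb
  set box : Finset (Fin n →₀ ℕ) :=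
    (Fintype.piFinset fun _ : Fin n => Finset.range q).map emb with hbox
  have hmembox : ∀ a : Fin n →₀ ℕ, a ∈ box ↔ ∀ i, a i < q := by
    intro a
    simp [hbox, hemb, Finset.mem_map_equiv, Fintype.mem_piFinset]
  set Δ : Finset (Fin n →₀ ℕ) := box.filter (fun a => ¬ j ≤ a) with hΔ
  have hmemΔ : ∀ a : Fin n →₀ ℕ, a ∈ Δ ↔ (∀ i, a i < q) ∧ ¬ j ≤ a := by
    intro a
    rw [hΔ, Finset.mem_filter, hmembox]
  -- cardinality of Δ
  have hboxcard : box.card = q ^ n := by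
    rw [hbox, Finset.card_map, Fintype.card_piFinset]
    simp
  have hfiltcard : (box.filter (fun a => j ≤ a)).card = ∏ i : Fin n, (q - j i) := by
    have : box.filter (fun a => j ≤ a)
        = (Fintype.piFinset fun i : Fin n => Finset.Ico (j i) q).map emb := by
      ext a
      rw [Finset.mem_filter, hmembox]
      simp only [hemb, Finset.mem_map_equiv, Fintype.mem_piFinset, Finset.mem_Ico]
      constructor
      · rintro ⟨h1, h2⟩ i
        exact ⟨h2 i, h1 i⟩
      · intro h
        exact ⟨fun i => (h i).2, fun i => (h i).1⟩
    rw [this, Finset.card_map, Fintype.card_piFinset]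
    simp [Nat.card_Ico]
  have hΔcard : Δ.card = q ^ n - ∏ i : Fin n, (q - j i) := by
    rw [hΔ, Finset.filter_not, Finset.card_sdiff_of_subset (Finset.filter_subset _ _), hboxcard, hfiltcard]
  -- linear evaluation map on S
  let Φ : MvPolynomial (Fin n) F →ₗ[F] (↥S → F) :=
    { toFun := fun f z => eval z.1 f
      map_add' := by intros; funext; simp
      map_smul' := by intros; funext; simp }
  have hsurj : ∀ u : ↥S → F, ∃ f, Φ f = u := by
    intro u
    refine ⟨∑ z : ↥S, MvPolynomial.C (u z) * indicator (z : Fin n → F), ?_⟩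
    funext z'
    show eval z'.1 (∑ z : ↥S, MvPolynomial.C (u z) * indicator (z : Fin n → F)) = u z'
    rw [map_sum, Finset.sum_eq_single z']
    · rw [eval_mul, eval_C, eval_indicator_apply_eq_one, mul_one]
    · intro z _ hz
      rw [eval_mul, eval_indicator_apply_eq_zero _ _ (fun e => hz (Subtype.ext e.symm)), mul_zero]
    · simp
  -- spanning set
  set T : Finset (↥S → F) := Δ.image (fun a => Φ (MvPolynomial.monomial a 1)) with hT
  have hspan : Submodule.span F (T : Set (↥S → F)) = ⊤ := by
    rw [eq_top_iff]
    rintro u -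
    obtain ⟨f, rfl⟩ := hsurj u
    obtain ⟨g, hgsupp, hgJ⟩ := reduce_modulo hq2 m R hR f
    have hΦfg : Φ f = Φ g := by
      have : Φ (f - g) = 0 := by
        funext z
        exact hvanish z.1 z.2 _ hgJ
      have h2 := congrArg (· + Φ g) this
      simpa [map_sub, sub_add_cancel] using h2
    rw [hΦfg, ← MvPolynomial.support_sum_monomial_coeff g, map_sum]
    refine Submodule.sum_mem _ ?_
    intro a ha
    have : MvPolynomial.monomial a (MvPolynomial.coeff a g)
        = MvPolynomial.coeff a g • MvPolynomial.monomial a (1 : F) := by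
      rw [MvPolynomial.smul_monomial, smul_eq_mul, mul_one]
    rw [this, map_smul]
    refine Submodule.smul_mem _ _ (Submodule.subset_span ?_)
    rw [hT]
    exact Finset.mem_coe.mpr (Finset.mem_image_of_mem _ ((hmemΔ a).mpr (hgsupp a ha)))
  -- dimension count
  have hcard : Fintype.card ↥S ≤ Δ.card := by
    have h1 := finrank_span_finset_le_card (R := F) T
    rw [Set.finrank, hspan, finrank_top] at h1
    calc Fintype.card ↥S = Module.finrank F (↥S → F) :=
          (Module.finrank_fintype_fun_eq_card F).symm
      _ ≤ T.card := h1
      _ ≤ Δ.card := Finset.card_image_le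
  have hncard : S.ncard = Fintype.card ↥S := by
    rw [← Nat.card_coe_set_eq, Nat.card_eq_fintype_card]
  rw [← hΔcard]
  rw [hncard]
  exact hcard
end

section
/- Let F be a finite field with q elements, let P be a polynomial in F[X_1, …, X_μ], and fix a monomial ordering ≺. Let R be a reduced representative of P (the degree of R in each variable is at most q−1 and P−R lies in the ideal generated by X_1^q−X_1, …, X_μ^q−X_μ), assume R ≠ 0, and let X_1^{j_1}⋯X_μ^{j_μ} be the leading monomial of R with respect to ≺. Then the number of points (x_1, …, x_μ) in F^μ with P(x_1, …, x_μ) ≠ 0 is at least (q−j_1)(q−j_2)⋯(q−j_μ). (Equivalently, if the coordinates are chosen independently and uniformly at random from F, the probability that P evaluates to a nonzero value is at least ∏_{v=1}^{μ}(q−j_v)/q^μ.) -/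
/-- Reduction of an exponent modulo the relation `x^q = x`. -/
private def redN (q k : ℕ) : ℕ := if k = 0 then 0 else (k - 1) % (q - 1) + 1

private lemma redN_zero (q : ℕ) : redN q 0 = 0 := rfl

private lemma redN_le (q k : ℕ) : redN q k ≤ k := by
  unfold redN
  split
  · omega
  · have := Nat.mod_le (k - 1) (q - 1); omega

private lemma redN_le_sub_one (q k : ℕ) (hq : 2 ≤ q) : redN q k ≤ q - 1 := by
  unfold redN
  split
  · omega
  · have := Nat.mod_lt (k - 1) (y := q - 1) (by omega); omega

private lemma redN_eq_self (q k : ℕ) (hk : k ≤ q - 1) : redN q k = k := by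
  unfold redN
  split
  · omega
  · have : (k - 1) % (q - 1) = k - 1 := Nat.mod_eq_of_lt (by omega)
    omega

private lemma pow_redN {F : Type*} [Field F] [Fintype F] (x : F) (k : ℕ) :
    x ^ redN (Fintype.card F) k = x ^ k := by
  rcases Nat.eq_zero_or_pos k with rfl | hk
  · rfl
  rw [redN, if_neg hk.ne']
  rcases eq_or_ne x 0 with rfl | hx
  · rw [zero_pow hk.ne', zero_pow (Nat.succ_ne_zero _)]
  · have h1 : x ^ (Fintype.card F - 1) = 1 := FiniteField.pow_card_sub_one_eq_one x hx
    have hk' : k = (Fintype.card F - 1) * ((k - 1) / (Fintype.card F - 1))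
        + ((k - 1) % (Fintype.card F - 1) + 1) := by
      have := Nat.div_add_mod (k - 1) (Fintype.card F - 1)
      omega
    conv_rhs => rw [hk', pow_add, pow_mul, h1, one_pow, one_mul]

universe u

private lemma aux_eq_zero {F : Type u} [Field F] [Fintype F] {μ : ℕ}
    (p : MvPolynomial (Fin μ) F) (h : ∀ v : Fin μ → F, MvPolynomial.eval v p = 0)
    (hp : p ∈ MvPolynomial.restrictDegree (Fin μ) F (Fintype.card F - 1)) : p = 0 := by
  classical
  let e : Fin μ ≃ ULift.{u} (Fin μ) := Equiv.ulift.symm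
  have h1 : MvPolynomial.rename (⇑e) p = 0 := by
    apply MvPolynomial.eq_zero_of_eval_eq_zero (ULift.{u} (Fin μ)) F
    · intro v
      rw [MvPolynomial.eval_rename]
      exact h _
    · rw [MvPolynomial.mem_restrictDegree] at hp ⊢
      intro s hs i
      rw [MvPolynomial.support_rename_of_injective e.injective, Finset.mem_image] at hs
      obtain ⟨s0, hs0, rfl⟩ := hs
      rw [Finsupp.mapDomain_equiv_apply]
      exact hp s0 hs0 _
  have h2 : MvPolynomial.rename (⇑e) p = MvPolynomial.rename (⇑e) 0 := by
    rw [h1, map_zero]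
  exact MvPolynomial.rename_injective (⇑e) e.injective h2

/-- Let `F` be a finite field with `q` elements, `P ∈ F[X_1, …, X_μ]`, and let `R` be a
reduced representative of `P` modulo `(X_1^q - X_1, …, X_μ^q - X_μ)` with `R ≠ 0`.  If
`X_1^{j_1} ⋯ X_μ^{j_μ}` is the leading monomial of `R` with respect to a monomial order,
then `P` is nonzero at no fewer than `(q - j_1) ⋯ (q - j_μ)` points of `F^μ`; equivalently,
a uniformly random point is a nonzero point of `P` with probability at least
`∏ (q - j_v) / q^μ`. -/
theorem card_nonzeros_ge_of_leading_monomial {F : Type*} [Field F] [Fintype F] (q μ : ℕ)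
    (hq : Fintype.card F = q) (m : MonomialOrder (Fin μ)) (P R : MvPolynomial (Fin μ) F)
    (hdeg : ∀ i : Fin μ, R.degreeOf i ≤ q - 1)
    (hmem : P - R ∈ Ideal.span
      (Set.range fun i : Fin μ => (MvPolynomial.X i : MvPolynomial (Fin μ) F) ^ q
        - MvPolynomial.X i))
    (hR : R ≠ 0) :
    (∏ v : Fin μ, (q - leadingExp m R v)) ≤
      {x : Fin μ → F | MvPolynomial.eval x P ≠ 0}.ncard := by
  classical
  subst hq
  set q := Fintype.card F with hqdef
  have hq2 : 2 ≤ q := Fintype.one_lt_card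
  set j := leadingExp m R with hj
  -- basic facts about the leading exponent
  have hsyn : m.toSyn j = R.support.sup fun d => m.toSyn d := by
    rw [hj, leadingExp, AddEquiv.apply_symm_apply]
  have hne : R.support.Nonempty := MvPolynomial.support_nonempty.mpr hR
  have hjmem : j ∈ R.support := by
    obtain ⟨b, hb, hbsup⟩ := Finset.exists_mem_eq_sup R.support hne fun d => m.toSyn d
    have hjb : m.toSyn j = m.toSyn b := by rw [hsyn, hbsup]
    rwa [m.toSyn.injective hjb]
  have hlesup : ∀ s ∈ R.support, m.toSyn s ≤ m.toSyn j := fun s hs => hsyn ▸ Finset.le_sup hs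
  have hcj : R.coeff j ≠ 0 := MvPolynomial.mem_support_iff.mp hjmem
  have hjq : ∀ i, j i ≤ q - 1 := by
    intro i
    refine le_trans ?_ (hdeg i)
    rw [MvPolynomial.degreeOf_eq_sup]
    exact Finset.le_sup (f := fun s : Fin μ →₀ ℕ => s i) hjmem
  -- `P` and `R` take the same values everywhere
  have hPR : ∀ x : Fin μ → F, MvPolynomial.eval x P = MvPolynomial.eval x R := by
    intro x
    have hker : P - R ∈ RingHom.ker (MvPolynomial.eval x) := by
      refine Ideal.span_le.mpr ?_ hmem
      rintro _ ⟨i, rfl⟩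
      simp only [SetLike.mem_coe, RingHom.mem_ker, map_sub, map_pow, MvPolynomial.eval_X]
      rw [hqdef, FiniteField.pow_card, sub_self]
    have h0 := RingHom.mem_ker.mp hker
    rw [map_sub] at h0
    exact sub_eq_zero.mp h0
  have hset : {x : Fin μ → F | MvPolynomial.eval x P ≠ 0}
      = {x : Fin μ → F | MvPolynomial.eval x R ≠ 0} := by
    ext x; simp [hPR x]
  rw [hset]
  set S : Set (Fin μ → F) := {x : Fin μ → F | MvPolynomial.eval x R ≠ 0} with hS
  haveI : Fintype ↥S := Fintype.ofFinite _
  -- the index box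
  set d : (∀ i : Fin μ, Fin (q - j i)) → (Fin μ →₀ ℕ) :=
    fun e => Finsupp.equivFunOnFinite.symm fun i => (e i : ℕ) with hd
  set a : (∀ i : Fin μ, Fin (q - j i)) → (Fin μ →₀ ℕ) := fun e => j + d e with ha
  set T : (∀ i : Fin μ, Fin (q - j i)) → MvPolynomial (Fin μ) F :=
    fun e => MvPolynomial.monomial (d e) 1 * R with hT
  have ha_apply : ∀ e i, a e i = j i + (e i : ℕ) := by
    intro e i; simp [ha, hd]
  have ha_inj : Function.Injective a := by
    intro e e' h
    funext i
    have h2 : a e i = a e' i := by rw [h]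
    rw [ha_apply, ha_apply] at h2
    exact Fin.ext (by omega)
  have haq : ∀ e i, a e i ≤ q - 1 := by
    intro e i
    have h1 : (e i : ℕ) < q - j i := (e i).isLt
    have h2 := hjq i
    rw [ha_apply]; omega
  have hcoeffT : ∀ e b, (T e).coeff b = if d e ≤ b then R.coeff (b - d e) else 0 := by
    intro e b
    simp [hT, MvPolynomial.coeff_monomial_mul']
  have hTle : ∀ e b, (T e).coeff b ≠ 0 → m.toSyn b ≤ m.toSyn (a e) := by
    intro e b hb
    rw [hcoeffT] at hb
    by_cases hle : d e ≤ b
    · rw [if_pos hle] at hb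
      have hmem' : b - d e ∈ R.support := MvPolynomial.mem_support_iff.mpr hb
      have h1 : m.toSyn (b - d e) ≤ m.toSyn j := hlesup _ hmem'
      calc m.toSyn b = m.toSyn (b - d e) + m.toSyn (d e) := by
            rw [← map_add, tsub_add_cancel_of_le hle]
        _ ≤ m.toSyn j + m.toSyn (d e) := add_le_add_left h1 _
        _ = m.toSyn (a e) := by rw [← map_add]
    · rw [if_neg hle] at hb; exact absurd rfl hb
  -- linear independence of the functions `x ↦ eval x (T e)` on `S`
  have hv : LinearIndependent F
      (fun e : ∀ i : Fin μ, Fin (q - j i) =>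
        fun x : ↥S => MvPolynomial.eval (x : Fin μ → F) (T e)) := by
    rw [Fintype.linearIndependent_iff]
    intro c hc
    by_contra hcon
    push_neg at hcon
    obtain ⟨e0, he0⟩ := hcon
    have hE : (Finset.univ.filter fun e : ∀ i : Fin μ, Fin (q - j i) => c e ≠ 0).Nonempty :=
      ⟨e0, by simp [he0]⟩
    obtain ⟨estar, hestar, hmax'⟩ := Finset.exists_max_image _ (fun e => m.toSyn (a e)) hE
    have hcstar : c estar ≠ 0 := (Finset.mem_filter.mp hestar).2
    have hmax : ∀ e, c e ≠ 0 → m.toSyn (a e) ≤ m.toSyn (a estar) := fun e hce =>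
      hmax' e (Finset.mem_filter.mpr ⟨Finset.mem_univ _, hce⟩)
    set h : MvPolynomial (Fin μ) F := ∑ e, c e • T e with hh
    have heval : ∀ x : Fin μ → F,
        MvPolynomial.eval x h = ∑ e, c e * MvPolynomial.eval x (T e) := by
      intro x
      rw [hh, map_sum]
      exact Finset.sum_congr rfl fun e _ => by
        rw [MvPolynomial.smul_eq_C_mul, map_mul, MvPolynomial.eval_C]
    have heval0 : ∀ x : Fin μ → F, MvPolynomial.eval x h = 0 := by
      intro x
      by_cases hx : MvPolynomial.eval x R = 0
      · rw [heval]
        refine Finset.sum_eq_zero fun e _ => ?_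
        rw [hT, map_mul, hx, mul_zero, mul_zero]
      · have hxS : x ∈ S := hx
        have h2 := congrFun hc ⟨x, hxS⟩
        rw [heval]
        simpa [Finset.sum_apply, Pi.smul_apply, smul_eq_mul] using h2
    have hcoeffh : ∀ b, h.coeff b = ∑ e, c e * (T e).coeff b := by
      intro b
      simp [hh, MvPolynomial.coeff_sum, MvPolynomial.coeff_smul, smul_eq_mul]
    have hstar : h.coeff (a estar) = c estar * R.coeff j := by
      rw [hcoeffh]
      rw [Finset.sum_eq_single estar]
      · rw [hcoeffT, if_pos (le_add_self : d estar ≤ j + d estar)]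
        congr 1
        rw [ha]
        simp
      · intro e _ hne
        by_cases hce : c e = 0
        · rw [hce, zero_mul]
        · by_cases hTb : (T e).coeff (a estar) = 0
          · rw [hTb, mul_zero]
          · exact absurd (ha_inj (m.toSyn.injective
              (le_antisymm (hmax e hce) (hTle e _ hTb)))) hne
      · intro hns; exact absurd (Finset.mem_univ _) hns
    have hstar_ne : h.coeff (a estar) ≠ 0 := by
      rw [hstar]; exact mul_ne_zero hcstar hcj
    have hsupph : ∀ b ∈ h.support, m.toSyn b ≤ m.toSyn (a estar) := by
      intro b hb
      have hbc : h.coeff b ≠ 0 := MvPolynomial.mem_support_iff.mp hb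
      rw [hcoeffh] at hbc
      obtain ⟨e, -, he⟩ := Finset.exists_ne_zero_of_sum_ne_zero hbc
      have hce : c e ≠ 0 := fun h0 => he (by rw [h0, zero_mul])
      have hTb : (T e).coeff b ≠ 0 := fun h0 => he (by rw [h0, mul_zero])
      exact le_trans (hTle e b hTb) (hmax e hce)
    -- reduction of `h`
    set ρ : (Fin μ →₀ ℕ) → (Fin μ →₀ ℕ) :=
      fun b => Finsupp.mapRange (redN q) (redN_zero q) b with hρ
    set rh : MvPolynomial (Fin μ) F :=
      ∑ b ∈ h.support, MvPolynomial.monomial (ρ b) (h.coeff b) with hrh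
    have hρ_le : ∀ b, ρ b ≤ b := by
      intro b
      rw [Finsupp.le_def]
      intro i
      rw [hρ, Finsupp.mapRange_apply]
      exact redN_le q (b i)
    have hρ_self : ρ (a estar) = a estar := by
      ext i
      rw [hρ, Finsupp.mapRange_apply]
      exact redN_eq_self q _ (haq estar i)
    have hcoeffrh : rh.coeff (a estar) = h.coeff (a estar) := by
      rw [hrh, MvPolynomial.coeff_sum]
      rw [Finset.sum_eq_single_of_mem (a estar) (MvPolynomial.mem_support_iff.mpr hstar_ne)]
      · rw [MvPolynomial.coeff_monomial, if_pos hρ_self]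
      · intro b hb hbne
        rw [MvPolynomial.coeff_monomial, if_neg]
        intro heq
        apply hbne
        have h1 : m.toSyn (a estar) ≤ m.toSyn b := by
          rw [← heq]; exact m.toSyn_monotone (hρ_le b)
        exact m.toSyn.injective (le_antisymm (hsupph b hb) h1)
    have hrh_eval : ∀ x : Fin μ → F, MvPolynomial.eval x rh = 0 := by
      intro x
      rw [hrh, map_sum]
      have hterm : ∀ b ∈ h.support,
          MvPolynomial.eval x (MvPolynomial.monomial (ρ b) (h.coeff b))
            = h.coeff b * ∏ i, x i ^ b i := by
        intro b _
        rw [MvPolynomial.eval_monomial]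
        congr 1
        rw [Finsupp.prod_fintype _ _ (fun i => pow_zero (x i))]
        refine Finset.prod_congr rfl fun i _ => ?_
        rw [hρ, Finsupp.mapRange_apply]
        exact pow_redN (x i) (b i)
      rw [Finset.sum_congr rfl hterm, ← MvPolynomial.eval_eq']
      exact heval0 x
    have hrh_mem : rh ∈ MvPolynomial.restrictDegree (Fin μ) F (Fintype.card F - 1) := by
      rw [MvPolynomial.mem_restrictDegree]
      intro s hs i
      have hcs : rh.coeff s ≠ 0 := MvPolynomial.mem_support_iff.mp hs
      rw [hrh, MvPolynomial.coeff_sum] at hcs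
      obtain ⟨b, -, hb⟩ := Finset.exists_ne_zero_of_sum_ne_zero hcs
      rw [MvPolynomial.coeff_monomial] at hb
      have hbs : ρ b = s := by
        by_contra hne
        rw [if_neg hne] at hb
        exact hb rfl
      rw [← hbs, hρ, Finsupp.mapRange_apply]
      exact redN_le_sub_one q _ hq2
    have hrh0 : rh = 0 := aux_eq_zero rh hrh_eval hrh_mem
    rw [hrh0, MvPolynomial.coeff_zero] at hcoeffrh
    exact hstar_ne hcoeffrh.symm
  -- conclude by counting dimensions
  have hcard := hv.fintype_card_le_finrank
  rw [Module.finrank_fintype_fun_eq_card] at hcard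
  have h1 : (∏ v : Fin μ, (q - j v)) = Fintype.card (∀ i : Fin μ, Fin (q - j i)) := by
    simp [Fintype.card_pi]
  have h2 : S.ncard = Fintype.card ↥S := by
    rw [← Nat.card_coe_set_eq, Nat.card_eq_fintype_card]
  rw [h1, h2]
  exact hcard
end

section
/- Let η, T, q be natural numbers with T < q. Let μ be a natural number and let x_1, …, x_μ be natural numbers satisfying 0 ≤ x_i ≤ T for all i and x_1 + ⋯ + x_μ ≤ T·η. Then ∏_{i=1}^{μ}(q−x_i)/q^μ ≥ ((q−T)/q)^η; equivalently, (∏_{i=1}^{μ}(q−x_i))·q^η ≥ (q−T)^η·q^μ. -/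
lemma bern (b : ℕ) : ∀ x : ℕ, b^(x+1) + (x+1)*b^x ≤ (b+1)^(x+1) := by
  intro x
  induction x with
  | zero => simp
  | succ n ih =>
    have h := Nat.mul_le_mul_left (b+1) ih
    calc b^(n+2) + (n+2)*b^(n+1)
        ≤ (b+1) * (b^(n+1) + (n+1)*b^n) := by ring_nf; nlinarith [Nat.zero_le (b^n), Nat.zero_le (b^n * n)]
      _ ≤ (b+1) * (b+1)^(n+1) := h
      _ = (b+1)^(n+2) := by ring

lemma step_ineq (b x y : ℕ) : (b+x+y)*b^x ≤ (b+y)*(b+1)^x := by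
  cases x with
  | zero => simp
  | succ n =>
    have h := Nat.mul_le_mul_left (b+y) (bern b n)
    have hp : b * b^n = b^(n+1) := by ring
    nlinarith [Nat.zero_le (b^n), Nat.zero_le (b^n * n), Nat.zero_le (y * b^n * n)]

lemma key (d : ℕ) : ∀ c x : ℕ, c^x * (c+x+d)^d ≤ (c+d)^(x+d) := by
  induction d with
  | zero => intro c x; simp
  | succ n ih =>
    intro c x
    calc c^x * (c+x+(n+1))^(n+1)
        = ((c+x+(n+1))*c^x) * (c+x+(n+1))^n := by ring
      _ ≤ ((c+(n+1))*(c+1)^x) * (c+x+(n+1))^n := Nat.mul_le_mul_right _ (step_ineq c x (n+1))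
      _ = (c+n+1) * ((c+1)^x * ((c+1)+x+n)^n) := by ring_nf
      _ ≤ (c+n+1) * ((c+1)+n)^(x+n) := Nat.mul_le_mul_left _ (ih (c+1) x)
      _ = (c+(n+1))^(x+(n+1)) := by ring_nf

/-- Let `η, T, q` be natural numbers with `T < q`, and let `x_1, …, x_μ` be natural numbers
with `x_i ≤ T` for all `i` and `x_1 + ⋯ + x_μ ≤ T·η`.  Then
`∏ (q - x_i) / q^μ ≥ ((q - T)/q)^η`, i.e. `(∏ (q - x_i)) · q^η ≥ (q - T)^η · q^μ`. -/
theorem prod_bound_ge_ho_bound (η T q μ : ℕ) (hTq : T < q) (x : Fin μ → ℕ)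
    (hx : ∀ i, x i ≤ T) (hsum : ∑ i, x i ≤ T * η) :
    (q - T) ^ η * q ^ μ ≤ (∏ i, (q - x i)) * q ^ η := by
  rcases Nat.eq_zero_or_pos T with hT | hT
  · have hx0 : ∀ i, x i = 0 := fun i => by have := hx i; omega
    simp [hT, hx0, mul_comm]
  obtain ⟨E, hηT⟩ : ∃ E, η * T = (∑ i, x i) + E :=
    ⟨T * η - ∑ i, x i, by rw [mul_comm]; omega⟩
  have hμT : μ * T = (∑ i, x i) + (∑ i, (T - x i)) := by
    rw [← Finset.sum_add_distrib,
      Finset.sum_congr rfl (fun i _ => Nat.add_sub_cancel' (hx i))]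
    simp [mul_comm]
  have ki : ∀ i, (q-T)^(x i) * q^(T - x i) ≤ (q - x i)^T := by
    intro i
    have h := key (T - x i) (q - T) (x i)
    have e1 : q - T + x i + (T - x i) = q := by have := hx i; omega
    have e2 : q - T + (T - x i) = q - x i := by have := hx i; omega
    have e3 : x i + (T - x i) = T := by have := hx i; omega
    rw [e1, e2, e3] at h
    exact h
  have hprodkey : (q-T)^(∑ i, x i) * q^(∑ i, (T - x i)) ≤ ∏ i, (q - x i)^T := by
    calc (q-T)^(∑ i, x i) * q^(∑ i, (T - x i))
        = ∏ i, ((q-T)^(x i) * q^(T - x i)) := by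
          rw [Finset.prod_mul_distrib, Finset.prod_pow_eq_pow_sum, Finset.prod_pow_eq_pow_sum]
      _ ≤ ∏ i, (q - x i)^T := Finset.prod_le_prod' (fun i _ => ki i)
  have main : ((q-T)^η * q^μ)^T ≤ ((∏ i, (q - x i)) * q^η)^T := by
    calc ((q-T)^η * q^μ)^T
        = (q-T)^(∑ i, x i) * (q-T)^E * (q^(∑ i, x i) * q^(∑ i, (T - x i))) := by
          rw [mul_pow, ← pow_mul, ← pow_mul, hηT, hμT, pow_add, pow_add]
      _ ≤ (q-T)^(∑ i, x i) * q^E * (q^(∑ i, x i) * q^(∑ i, (T - x i))) := by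
          have h := Nat.pow_le_pow_left (Nat.sub_le q T) E
          exact Nat.mul_le_mul_right _ (Nat.mul_le_mul_left _ h)
      _ = ((q-T)^(∑ i, x i) * q^(∑ i, (T - x i))) * q^(η*T) := by
          rw [hηT, pow_add]; ring
      _ ≤ (∏ i, (q - x i)^T) * q^(η*T) := Nat.mul_le_mul_right _ hprodkey
      _ = ((∏ i, (q - x i)) * q^η)^T := by rw [mul_pow, ← Finset.prod_pow, ← pow_mul]
  exact (Nat.pow_le_pow_iff_left (by omega : T ≠ 0)).mp main
end

section
/- Let α be a type, let r be a relation on α whose transitive closure is irreflexive (i.e., r is acyclic), and let p be a permutation of α. Suppose λ ∈ α and x is a natural number such that: (1) the elements λ, p(λ), p^{(2)}(λ), …, p^{(x)}(λ) are pairwise distinct; (2) p^{(x+1)}(λ) belongs to the set {λ, p(λ), …, p^{(x)}(λ)}; and (3) for every k with 0 ≤ k ≤ x, either p^{(k+1)}(λ) = p^{(k)}(λ) or r(p^{(k)}(λ), p^{(k+1)}(λ)) holds. Then x = 0. -/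
/-- Let `r` be an acyclic relation on `α` (its transitive closure is irreflexive) and let
`p` be a permutation of `α`.  If `λ, p(λ), …, p^{(x)}(λ)` are pairwise distinct,
`p^{(x+1)}(λ)` lies in `{λ, p(λ), …, p^{(x)}(λ)}`, and each consecutive step either is a
fixed point (`p^{(k+1)}(λ) = p^{(k)}(λ)`) or follows an `r`-edge, then `x = 0`. -/
theorem perm_cycle_acyclic_eq_zero {α : Type*} (r : α → α → Prop)
    (hr : Irreflexive (Relation.TransGen r)) (p : Equiv.Perm α) (lam : α) (x : ℕ)
    (h1 : ∀ i ≤ x, ∀ j ≤ x, (⇑p)^[i] lam = (⇑p)^[j] lam → i = j)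
    (h2 : ∃ k ≤ x, (⇑p)^[x + 1] lam = (⇑p)^[k] lam)
    (h3 : ∀ k ≤ x, (⇑p)^[k + 1] lam = (⇑p)^[k] lam ∨ r ((⇑p)^[k] lam) ((⇑p)^[k + 1] lam)) :
    x = 0 := by
  by_contra hx
  have hx1 : 1 ≤ x := Nat.one_le_iff_ne_zero.mpr hx
  -- every step strictly below x is an r-edge
  have step : ∀ j < x, r ((⇑p)^[j] lam) ((⇑p)^[j + 1] lam) := by
    intro j hj
    rcases h3 j (le_of_lt hj) with h | h
    · exact absurd (h1 (j + 1) hj j (le_of_lt hj) h) (by omega)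
    · exact h
  -- chains of r-edges
  have chain : ∀ a b, a < b → b ≤ x → Relation.TransGen r ((⇑p)^[a] lam) ((⇑p)^[b] lam) := by
    intro a b hab hbx
    induction b with
    | zero => omega
    | succ n ih =>
      rcases Nat.lt_or_ge a n with h | h
      · exact (ih h (by omega)).tail (step n (by omega))
      · have : a = n := by omega
        subst this
        exact Relation.TransGen.single (step a (by omega))
  rcases h3 x le_rfl with hfix | hedge
  · -- p^[x+1] lam = p^[x] lam: injectivity gives p^[x] lam = p^[x-1] lam
    have e1 : p ((⇑p)^[x] lam) = p ((⇑p)^[x - 1] lam) := by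
      rw [← Function.iterate_succ_apply' p x lam, hfix,
        ← Function.iterate_succ_apply' p (x - 1) lam]
      congr 1
      omega
    have e2 : (⇑p)^[x] lam = (⇑p)^[x - 1] lam := p.injective e1
    have := h1 x le_rfl (x - 1) (by omega) e2
    omega
  · obtain ⟨k, hk, hke⟩ := h2
    rcases Nat.lt_or_ge k x with hkx | hkx
    · rw [hke] at hedge
      exact hr _ ((chain k x hkx le_rfl).tail hedge)
    · have : k = x := by omega
      subst this
      rw [hke] at hedge
      exact hr _ (Relation.TransGen.single hedge)
end

section
/- Let K be a commutative ring, let σ be a type of variables, and let M be an n×n matrix with entries in the multivariate polynomial ring K[X_v : v ∈ σ] such that every entry of M has total degree at most 1. Let C be the set of column indices j such that some entry M(i, j) has total degree exactly 1 (i.e., the column contains a non-constant entry). Then the total degree of the determinant of M is at most the cardinality of C. -/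
/-- Let `M` be an `n × n` matrix over a multivariate polynomial ring `K[X_v : v ∈ σ]` all of
whose entries have total degree at most `1`, and let `C` be the set of columns containing a
non-constant entry (an entry of total degree exactly `1`).  Then the total degree of the
determinant of `M` is at most the cardinality of `C`. -/
theorem det_totalDegree_le_card_nonconstant_columns {K σ : Type*} [CommRing K] (n : ℕ)
    (M : Matrix (Fin n) (Fin n) (MvPolynomial σ K))
    (hdeg : ∀ i j, (M i j).totalDegree ≤ 1) :
    (M.det).totalDegree ≤ {j : Fin n | ∃ i, (M i j).totalDegree = 1}.ncard := by
  classical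
  set F : Finset (Fin n) := Finset.univ.filter (fun j => ∃ i, (M i j).totalDegree = 1) with hF
  have hset : {j : Fin n | ∃ i, (M i j).totalDegree = 1}.ncard = F.card := by
    rw [hF]
    rw [← Set.ncard_coe_finset]
    congr 1
    ext j
    simp
  rw [hset, Matrix.det_apply]
  refine le_trans (MvPolynomial.totalDegree_finset_sum _ _) ?_
  refine Finset.sup_le fun g _ => ?_
  have hsmul : (Equiv.Perm.sign g • ∏ i, M (g i) i : MvPolynomial σ K).totalDegree
      ≤ (∏ i, M (g i) i).totalDegree := by
    rcases Int.units_eq_one_or (Equiv.Perm.sign g) with h | h <;> simp [h]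
  refine le_trans hsmul ?_
  refine le_trans (MvPolynomial.totalDegree_finset_prod _ _) ?_
  calc ∑ i, (M (g i) i).totalDegree ≤ ∑ i, (if i ∈ F then 1 else 0) := by
        refine Finset.sum_le_sum fun i _ => ?_
        by_cases hi : i ∈ F
        · simpa [hi] using hdeg (g i) i
        · simp only [hi, if_false]
          have : ¬ ∃ k, (M k i).totalDegree = 1 := by
            simpa [hF] using hi
          have h1 := hdeg (g i) i
          push_neg at this
          have := this (g i)
          omega
    _ = F.card := by simp
end

section
/- Let F be a finite field with q elements and let R be a nonzero polynomial in F[X_1, …, X_μ]. Let T and η be natural numbers with T < q, and suppose that the degree of R in each variable X_i is at most T and that the total degree of R is at most T·η. Then the number of points (x_1, …, x_μ) in F^μ with R(x_1, …, x_μ) ≠ 0 is at least (q−T)^η·q^{μ−η} when μ ≥ η; equivalently, (number of such points)·q^η ≥ (q−T)^η·q^μ. In particular, if the coordinates are chosen independently and uniformly at random from F, the probability that R evaluates to a nonzero value is at least ((q−T)/q)^η. -/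
open Finset

private lemma amgm_real {q T u : ℕ} (hu : u ≤ T) (hT : T ≤ q) (hT0 : 0 < T) :
    ((q : ℝ) - T) ^ u * (q : ℝ) ^ (T - u) ≤ ((q : ℝ) - u) ^ T := by
  have hTR : (0:ℝ) < T := by exact_mod_cast hT0
  have hTq : (T:ℝ) ≤ q := by exact_mod_cast hT
  have huT : (u:ℝ) ≤ T := by exact_mod_cast hu
  have hqT : (0:ℝ) ≤ (q:ℝ) - T := by linarith
  have hq0 : (0:ℝ) ≤ (q:ℝ) := by positivity
  have hqu : (0:ℝ) ≤ (q:ℝ) - u := by linarith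
  have h := Real.geom_mean_le_arith_mean2_weighted
      (w₁ := (u:ℝ)/T) (w₂ := ((T:ℝ)-u)/T) (p₁ := (q:ℝ) - T) (p₂ := (q:ℝ))
      (by positivity) (by apply div_nonneg <;> linarith) hqT hq0 (by field_simp; ring)
  have hrhs : (u:ℝ)/T * ((q:ℝ) - T) + ((T:ℝ)-u)/T * q = (q:ℝ) - u := by
    field_simp
    ring
  rw [hrhs] at h
  have h2 := pow_le_pow_left₀ (by positivity) h T
  calc ((q : ℝ) - T) ^ u * (q : ℝ) ^ (T - u)
      = (((q:ℝ) - T) ^ ((u:ℝ)/T) * (q:ℝ) ^ (((T:ℝ)-u)/T)) ^ T := by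
        rw [mul_pow, ← Real.rpow_natCast (((q:ℝ) - T) ^ ((u:ℝ)/T)) T,
          ← Real.rpow_natCast ((q:ℝ) ^ (((T:ℝ)-u)/T)) T,
          ← Real.rpow_mul hqT, ← Real.rpow_mul hq0,
          div_mul_cancel₀ _ (ne_of_gt hTR), div_mul_cancel₀ _ (ne_of_gt hTR),
          Real.rpow_natCast]
        congr 1
        rw [show ((T:ℝ) - u) = ((T - u : ℕ) : ℝ) by push_cast [Nat.cast_sub hu]; ring,
          Real.rpow_natCast]
    _ ≤ ((q:ℝ) - u) ^ T := h2

private lemma amgm_nat {q T u : ℕ} (hu : u ≤ T) (hT : T < q) :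
    (q - T) ^ u * q ^ (T - u) ≤ (q - u) ^ T := by
  rcases Nat.eq_zero_or_pos T with rfl | hT0
  · interval_cases u; simp
  · have h := amgm_real hu hT.le hT0
    have h1 : ((q - T : ℕ) : ℝ) = (q:ℝ) - T := by
      push_cast [Nat.cast_sub hT.le]; ring
    have h2 : ((q - u : ℕ) : ℝ) = (q:ℝ) - u := by
      push_cast [Nat.cast_sub (hu.trans hT.le)]; ring
    have : (((q - T) ^ u * q ^ (T - u) : ℕ) : ℝ) ≤ (((q - u) ^ T : ℕ) : ℝ) := by
      push_cast [h1, h2]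
      exact h
    exact_mod_cast this

private lemma prod_bound {q T η μ : ℕ} (u : Fin μ → ℕ) (hu : ∀ i, u i ≤ T)
    (hsum : ∑ i, u i ≤ T * η) (hT : T < q) (hμ : η ≤ μ) :
    (q - T) ^ η * q ^ (μ - η) ≤ ∏ i, (q - u i) := by
  rcases Nat.eq_zero_or_pos T with rfl | hT0
  · have hu0 : ∀ i, u i = 0 := fun i => Nat.le_zero.mp (hu i)
    simp only [Nat.sub_zero, hu0]
    rw [Finset.prod_const, Finset.card_univ, Fintype.card_fin, ← pow_add]
    rw [Nat.add_sub_cancel' hμ]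
  · rw [← Nat.pow_le_pow_iff_left (n := T) hT0.ne']
    set s := ∑ i, u i with hs
    set m := ∑ i, (T - u i) with hm
    have hsm : s + m = μ * T := by
      rw [hs, hm, ← Finset.sum_add_distrib]
      have h : ∀ i : Fin μ, u i + (T - u i) = T := fun i => Nat.add_sub_cancel' (hu i)
      simp only [h, Finset.sum_const, Finset.card_univ, Fintype.card_fin, smul_eq_mul]
    have key : (q - T) ^ s * q ^ m ≤ (∏ i, (q - u i)) ^ T := by
      rw [← Finset.prod_pow_eq_pow_sum, ← Finset.prod_pow_eq_pow_sum, ← Finset.prod_mul_distrib,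
        ← Finset.prod_pow]
      exact Finset.prod_le_prod' fun i _ => amgm_nat (hu i) hT
    refine le_trans ?_ key
    have hηT : s ≤ η * T := by rw [mul_comm]; exact hsum
    have hab : η * T ≤ μ * T := Nat.mul_le_mul_right T hμ
    have e1 : ((q - T) ^ η) ^ T = (q - T) ^ s * (q - T) ^ (η * T - s) := by
      rw [← pow_mul, ← pow_add]
      congr 1
      omega
    have e3 : η * T - s + (μ - η) * T = m := by
      rw [Nat.sub_mul]
      omega
    rw [mul_pow, e1, ← pow_mul, mul_assoc]
    apply Nat.mul_le_mul_left
    calc (q - T) ^ (η * T - s) * q ^ ((μ - η) * T)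
        ≤ q ^ (η * T - s) * q ^ ((μ - η) * T) :=
          Nat.mul_le_mul_right _ (Nat.pow_le_pow_left (Nat.sub_le q T) _)
      _ = q ^ m := by rw [← pow_add, e3]

private lemma key_count {F : Type*} [Field F] [Fintype F] [DecidableEq F] (q : ℕ)
    (hq : Fintype.card F = q) :
    ∀ (n : ℕ) (S : MvPolynomial (Fin n) F), S ≠ 0 →
      ∃ u : Fin n → ℕ, (∀ i, u i ≤ S.degreeOf i) ∧ (∑ i, u i) ≤ S.totalDegree ∧
        ∏ i, (q - u i) ≤
          (Finset.univ.filter fun x : Fin n → F => MvPolynomial.eval x S ≠ 0).card := by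
  intro n
  induction n with
  | zero =>
    intro S hS
    refine ⟨fun _ => 0, fun i => Nat.zero_le _, by rw [Fin.sum_univ_zero]; exact Nat.zero_le _, ?_⟩
    have he : (Finset.univ.filter fun x : Fin 0 → F => MvPolynomial.eval x S ≠ 0)
        = Finset.univ := by
      ext x
      simp only [Finset.mem_filter, Finset.mem_univ, true_and, iff_true]
      rw [MvPolynomial.eq_C_of_isEmpty S, MvPolynomial.eval_C]
      exact fun h => hS (by rw [MvPolynomial.eq_C_of_isEmpty S, h, map_zero])
    rw [he, Finset.card_univ, Fin.prod_univ_zero]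
    exact Fintype.card_pos
  | succ n ih =>
    intro S hS
    set P := MvPolynomial.finSuccEquiv F n S with hPdef
    have hP : P ≠ 0 := by
      simp only [hPdef, ne_eq, EmbeddingLike.map_eq_zero_iff]
      exact hS
    set k := P.natDegree with hk
    have hL : P.coeff k ≠ 0 := by
      have := Polynomial.leadingCoeff_ne_zero.mpr hP
      rwa [Polynomial.leadingCoeff] at this
    obtain ⟨u', hdeg', htot', hcard'⟩ := ih (P.coeff k) hL
    refine ⟨Fin.cons k u', ?_, ?_, ?_⟩
    · intro i
      refine Fin.cases ?_ ?_ i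
      · rw [Fin.cons_zero]
        exact (MvPolynomial.natDegree_finSuccEquiv S).le
      · intro j
        rw [Fin.cons_succ]
        exact (hdeg' j).trans (MvPolynomial.degreeOf_coeff_finSuccEquiv S j k)
    · rw [Fin.sum_univ_succ]
      simp only [Fin.cons_zero, Fin.cons_succ]
      have h : (P.coeff k).totalDegree + k ≤ S.totalDegree :=
        MvPolynomial.totalDegree_coeff_finSuccEquiv_add_le S k hL
      omega
    · rw [Fin.prod_univ_succ]
      simp only [Fin.cons_zero, Fin.cons_succ]
      set A := Finset.univ.filter
        (fun x : Fin (n+1) → F => MvPolynomial.eval x S ≠ 0) with hA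
      set B := Finset.univ.filter
        (fun y : Fin n → F => MvPolynomial.eval y (P.coeff k) ≠ 0) with hB
      have hfib : ∀ y ∈ B, q - k ≤ (A.filter fun x => Fin.tail x = y).card := by
        intro y hy
        have hy' : MvPolynomial.eval y (P.coeff k) ≠ 0 := (Finset.mem_filter.mp hy).2
        set f : Polynomial F := P.map (MvPolynomial.eval y) with hf
        have hfk : f.coeff k ≠ 0 := by simpa [hf, Polynomial.coeff_map] using hy'
        have hf0 : f ≠ 0 := fun h => hfk (by simp [h])
        have hfd : f.natDegree ≤ k := Polynomial.natDegree_map_le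
        have hz : (Finset.univ.filter fun a : F => Polynomial.eval a f = 0).card ≤ k := by
          calc (Finset.univ.filter fun a : F => Polynomial.eval a f = 0).card
              ≤ f.roots.toFinset.card := by
                apply Finset.card_le_card
                intro a ha
                simp only [Finset.mem_filter, Finset.mem_univ, true_and] at ha
                rw [Multiset.mem_toFinset, Polynomial.mem_roots hf0]
                exact ha
            _ ≤ Multiset.card f.roots := f.roots.toFinset_card_le
            _ ≤ f.natDegree := Polynomial.card_roots' f
            _ ≤ k := hfd
        have hcnt : (Finset.univ.filter fun a : F => Polynomial.eval a f = 0).card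
            + (Finset.univ.filter fun a : F => ¬ Polynomial.eval a f = 0).card = q := by
          rw [Finset.card_filter_add_card_filter_not, Finset.card_univ, hq]
        have hge : (Finset.univ.filter fun a : F => ¬ Polynomial.eval a f = 0).card
            ≤ (A.filter fun x => Fin.tail x = y).card := by
          apply Finset.card_le_card_of_injOn (fun a => (Fin.cons a y : Fin (n+1) → F))
          · intro a ha
            simp only [Finset.mem_coe, Finset.mem_filter, Finset.mem_univ, true_and, hA, ne_eq] at ha ⊢
            refine ⟨?_, by simp⟩
            rw [MvPolynomial.eval_eq_eval_mv_eval']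
            exact ha
          · intro a _ b _ h
            simpa using congrFun h 0
        omega
      have hsplit : ∑ y ∈ B, (A.filter fun x => Fin.tail x = y).card ≤ A.card := by
        rw [Finset.card_eq_sum_card_fiberwise
          (f := fun x : Fin (n+1) → F => Fin.tail x) (t := Finset.univ)
          (fun x _ => Finset.mem_univ _)]
        exact Finset.sum_le_sum_of_subset (Finset.subset_univ B)
      calc (q - k) * ∏ i, (q - u' i)
          ≤ (q - k) * B.card := Nat.mul_le_mul_left _ hcard'
        _ = B.card * (q - k) := mul_comm _ _
        _ ≤ ∑ y ∈ B, (A.filter fun x => Fin.tail x = y).card := by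
            simpa using Finset.card_nsmul_le_sum B _ _ hfib
        _ ≤ A.card := hsplit


/-- Let `F` be a finite field with `q` elements and let `R ∈ F[X_1, …, X_μ]` be a nonzero
polynomial.  Let `T < q` and `η` be natural numbers with `η ≤ μ`, and suppose the degree of
`R` in each variable is at most `T` and the total degree of `R` is at most `T·η`.  Then `R`
is nonzero at no fewer than `(q - T)^η · q^{μ - η}` points of `F^μ`; equivalently, the number
of such points satisfies `(#points) · q^η ≥ (q - T)^η · q^μ`, so a uniformly random point is
a nonzero point of `R` with probability at least `((q - T)/q)^η`. -/
theorem card_nonzeros_ge_ho_bound {F : Type*} [Field F] [Fintype F] (q μ T η : ℕ)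
    (hq : Fintype.card F = q) (R : MvPolynomial (Fin μ) F) (hR : R ≠ 0) (hT : T < q)
    (hdeg : ∀ i : Fin μ, R.degreeOf i ≤ T) (htot : R.totalDegree ≤ T * η) (hμ : η ≤ μ) :
    (q - T) ^ η * q ^ μ ≤ {x : Fin μ → F | MvPolynomial.eval x R ≠ 0}.ncard * q ^ η := by
  classical
  obtain ⟨u, hu1, hu2, hu3⟩ := key_count q hq μ R hR
  have hu : ∀ i, u i ≤ T := fun i => (hu1 i).trans (hdeg i)
  have hsum : ∑ i, u i ≤ T * η := hu2.trans htot
  have hprod := prod_bound u hu hsum hT hμ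
  have hset : {x : Fin μ → F | MvPolynomial.eval x R ≠ 0}.ncard
      = (Finset.univ.filter fun x : Fin μ → F => MvPolynomial.eval x R ≠ 0).card := by
    rw [← Set.ncard_coe_finset]
    congr 1
    ext x
    simp
  have hN : (q - T) ^ η * q ^ (μ - η) ≤ {x : Fin μ → F | MvPolynomial.eval x R ≠ 0}.ncard := by
    rw [hset]
    exact hprod.trans hu3
  calc (q - T) ^ η * q ^ μ = ((q - T) ^ η * q ^ (μ - η)) * q ^ η := by
        rw [mul_assoc, ← pow_add, Nat.sub_add_cancel hμ]
    _ ≤ _ := Nat.mul_le_mul_right _ hN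
end
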